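/- In the matrix dynamical system dA_{ij}/dt = (2s − m r_i − n c_j) A_{ij}, where s, r_i, c_j refer to A∘A (entrywise square), the size s = ∑_{ij} A_{ij}² satisfies ds/dt = −2Δ, where Δ = (1/m)∑_{i=1}^m (s − m r_i)² + (1/n)∑_{j=1}^n (s − n c_j)². -/

import Mathlib

open Matrix BigOperators

lemma key_alg {m n : ℕ} (hm : (m:ℝ) ≠ 0) (hn : (n:ℝ) ≠ 0)
    (R : Fin m → ℝ) (C : Fin n → ℝ) (S : ℝ)
    (hRS : ∑ i, R i = S) (hCS : ∑ j, C j = S) :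
    -2 * ((1 / (m : ℝ)) * ∑ i, (S - (m : ℝ) * R i) ^ 2 +
          (1 / (n : ℝ)) * ∑ j, (S - (n : ℝ) * C j) ^ 2)
    = 4 * S * S - 2 * m * ∑ i, (R i)^2 - 2 * n * ∑ j, (C j)^2 := by
  have e1 : ∑ i, (S - (m : ℝ) * R i) ^ 2
      = (m:ℝ) * S^2 - 2*(m:ℝ)*S*S + (m:ℝ)^2 * ∑ i, (R i)^2 := by
    have : ∀ i, (S - (m : ℝ) * R i) ^ 2
        = S^2 - (2*(m:ℝ)*S) * R i + (m:ℝ)^2 * (R i)^2 := by intro i; ring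
    simp only [this, Finset.sum_add_distrib, Finset.sum_sub_distrib,
      Finset.sum_const, Finset.card_univ, Fintype.card_fin, nsmul_eq_mul,
      ← Finset.mul_sum, hRS]
  have e2 : ∑ j, (S - (n : ℝ) * C j) ^ 2
      = (n:ℝ) * S^2 - 2*(n:ℝ)*S*S + (n:ℝ)^2 * ∑ j, (C j)^2 := by
    have : ∀ j, (S - (n : ℝ) * C j) ^ 2
        = S^2 - (2*(n:ℝ)*S) * C j + (n:ℝ)^2 * (C j)^2 := by intro j; ring
    simp only [this, Finset.sum_add_distrib, Finset.sum_sub_distrib,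
      Finset.sum_const, Finset.card_univ, Fintype.card_fin, nsmul_eq_mul,
      ← Finset.mul_sum, hCS]
  rw [e1, e2]
  field_simp
  ring

theorem matSize_deriv {m n : ℕ} (hm : 0 < m) (hn : 0 < n)
    (A : ℝ → Matrix (Fin m) (Fin n) ℝ)
    (s : ℝ → ℝ) (r : ℝ → Fin m → ℝ) (c : ℝ → Fin n → ℝ) (Δ : ℝ → ℝ)
    (hr : ∀ t i, r t i = ∑ j, (A t i j) ^ 2)
    (hc : ∀ t j, c t j = ∑ i, (A t i j) ^ 2)
    (hs : ∀ t, s t = ∑ i, ∑ j, (A t i j) ^ 2)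
    (hΔ : ∀ t, Δ t = (1 / (m : ℝ)) * ∑ i, (s t - (m : ℝ) * r t i) ^ 2 +
                     (1 / (n : ℝ)) * ∑ j, (s t - (n : ℝ) * c t j) ^ 2)
    (hode : ∀ t i j, HasDerivAt (fun τ => A τ i j)
      ((2 * s t - (m : ℝ) * r t i - (n : ℝ) * c t j) * A t i j) t) :
    ∀ t, HasDerivAt s (-2 * Δ t) t := by
  intro t
  have hfun : s = fun τ => ∑ i, ∑ j, (A τ i j) ^ 2 := funext hs
  have hd : HasDerivAt (fun τ => ∑ i, ∑ j, (A τ i j) ^ 2)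
      (∑ i, ∑ j, (2 : ℕ) * A t i j ^ 1 *
        ((2 * s t - (m : ℝ) * r t i - (n : ℝ) * c t j) * A t i j)) t := by
    apply HasDerivAt.fun_sum; intro i _
    apply HasDerivAt.fun_sum; intro j _
    exact (hode t i j).pow 2
  rw [hfun]
  convert hd using 1
  -- algebraic identity
  have hmn : (m:ℝ) ≠ 0 := Nat.cast_ne_zero.mpr hm.ne'
  have hnn : (n:ℝ) ≠ 0 := Nat.cast_ne_zero.mpr hn.ne'
  set a := A t with ha
  have hRS : ∑ i, r t i = s t := by rw [hs]; exact Finset.sum_congr rfl (fun i _ => hr t i)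
  have hCS : ∑ j, c t j = s t := by
    rw [hs, Finset.sum_comm]; exact Finset.sum_congr rfl (fun j _ => hc t j)
  rw [hΔ, key_alg hmn hnn (r t) (c t) (s t) hRS hCS]
  -- now compute RHS sum
  have expand : ∀ i j, (2 : ℕ) * a i j ^ 1 *
        ((2 * s t - (m : ℝ) * r t i - (n : ℝ) * c t j) * a i j)
      = 4 * s t * a i j ^ 2 - 2 * (m:ℝ) * r t i * a i j ^ 2
        - 2 * (n:ℝ) * c t j * a i j ^ 2 := by
    intro i j; push_cast; ring
  simp only [expand, Finset.sum_sub_distrib]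
  have t1 : ∑ i, ∑ j, 4 * s t * a i j ^ 2 = 4 * s t * s t := by
    simp only [← Finset.mul_sum]
    rw [hs]
  have t2 : ∑ i, ∑ j, 2 * (m:ℝ) * r t i * a i j ^ 2 = 2 * (m:ℝ) * ∑ i, (r t i)^2 := by
    rw [Finset.mul_sum]
    refine Finset.sum_congr rfl (fun i _ => ?_)
    rw [← Finset.mul_sum, ← hr t i]; ring
  have t3 : ∑ i, ∑ j, 2 * (n:ℝ) * c t j * a i j ^ 2 = 2 * (n:ℝ) * ∑ j, (c t j)^2 := by
    rw [Finset.sum_comm, Finset.mul_sum]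
    refine Finset.sum_congr rfl (fun j _ => ?_)
    rw [← Finset.mul_sum, ← hc t j]; ring
  rw [t1, t2, t3]
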